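/- Let Λ and Π be finite dimensional selfinjective algebras over a field k, with algebra homomorphisms i: Λ → Π and π: Π → Λ such that π ∘ i = id_Λ, and suppose Π is projective as a left Λ-module (via i). Then the dimension of the stable module category of Λ as a triangulated category is at most the dimension of the stable module category of Π: dim(stmod Λ) ≤ dim(stmod Π). -/

import Mathlib

noncomputable section


/-- A ring is selfinjective if it is injective as a module over itself. -/
def IsSelfInjectiveRing (R : Type) [Ring R] : Prop := Module.Injective R R

/-- `0 → C → E → D → 0` is a short exact sequence. -/
def IsExtOf (R : Type) [Ring R] (C E D : ModuleCat.{0} R) : Prop :=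
  ∃ (f : C →ₗ[R] E) (g : E →ₗ[R] D),
    Function.Injective f ∧ Function.Surjective g ∧ LinearMap.range f = LinearMap.ker g

/-- `M` and `N` are isomorphic in the stable module category: they become isomorphic after
adding projective direct summands. -/
def StIso (R : Type) [Ring R] (M N : ModuleCat.{0} R) : Prop :=
  ∃ P Q : ModuleCat.{0} R,
    Module.Finite R P ∧ Module.Projective R P ∧ Module.Finite R Q ∧ Module.Projective R Q ∧
    Nonempty ((M × P) ≃ₗ[R] (N × Q))

/-- The closure of `{G}` under (de)suspension in the stable module category: `N ∈ shifts G`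
if `N` is an iterated syzygy or cosyzygy of `G`. -/
inductive InShifts (R : Type) [Ring R] (G : ModuleCat.{0} R) : ModuleCat.{0} R → Prop
  | base : InShifts R G G
  | up (M N E : ModuleCat.{0} R) : InShifts R G M → Module.Finite R N → Module.Finite R E →
      Module.Projective R E → IsExtOf R M E N → InShifts R G N
  | down (M N E : ModuleCat.{0} R) : InShifts R G M → Module.Finite R N → Module.Finite R E →
      Module.Projective R E → IsExtOf R N E M → InShifts R G N

/-- `M` lies in `thick¹(C)`: up to projective summands, `M` is a direct summand of a finite
direct sum of shifts of objects of `C`. -/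
def InThick1 (R : Type) [Ring R] (C : ModuleCat.{0} R → Prop) (M : ModuleCat.{0} R) : Prop :=
  ∃ (t : ℕ) (F : Fin t → ModuleCat.{0} R),
    (∀ i, Module.Finite R (F i) ∧ ∃ G, C G ∧ InShifts R G (F i)) ∧
    ∃ P Q : ModuleCat.{0} R,
      Module.Finite R P ∧ Module.Projective R P ∧ Module.Finite R Q ∧ Module.Projective R Q ∧
      ∃ (ι : (M × P) →ₗ[R] ((∀ i, F i) × Q)) (π : ((∀ i, F i) × Q) →ₗ[R] (M × P)),
        ∀ z, π (ι z) = z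

/-- `M ∈ C ∗ D`: there is a triangle `C → M → D`, i.e. up to stable isomorphism `M` is an
extension of an object of `D` by an object of `C`. -/
def InStar (R : Type) [Ring R] (C D : ModuleCat.{0} R → Prop) (M : ModuleCat.{0} R) : Prop :=
  ∃ A E B : ModuleCat.{0} R,
    C A ∧ D B ∧ Module.Finite R A ∧ Module.Finite R E ∧ Module.Finite R B ∧
    IsExtOf R A E B ∧ StIso R M E

/-- `Thick R C n` is `thick^{n+1}(C)` in the stable module category. -/
def Thick (R : Type) [Ring R] (C : ModuleCat.{0} R → Prop) :
    ℕ → ModuleCat.{0} R → Prop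
  | 0 => InThick1 R C
  | (n + 1) => InThick1 R (InStar R (Thick R C n) (InThick1 R C))

/-- The dimension of the stable module category of `R` (as a triangulated category, via
Rouquier's notion of dimension) is at most `d`. -/
def StModDimLE (R : Type) [Ring R] (d : ℕ) : Prop :=
  ∃ G : ModuleCat.{0} R, Module.Finite R G ∧
    ∀ M : ModuleCat.{0} R, Module.Finite R M → Thick R (fun X => X = G) d M

namespace BerghOppermann

/-! ### Generic finiteness lemmas -/

theorem finite_of_smul_factor {A B M : Type} [Semiring A] [Semiring B] [AddCommMonoid M]
    [Module A M] [Module B M]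
    (h : ∀ b : B, ∃ a : A, ∀ x : M, b • x = a • x)
    (hfin : Module.Finite B M) : Module.Finite A M := by
  obtain ⟨s, hs⟩ := hfin.fg_top
  refine ⟨⟨s, ?_⟩⟩
  let N : Submodule B M :=
    { carrier := (Submodule.span A (s : Set M) : Set M)
      add_mem' := fun hx hy => Submodule.add_mem _ hx hy
      zero_mem' := Submodule.zero_mem _
      smul_mem' := fun b x hx => by
        obtain ⟨a, ha⟩ := h b
        show b • x ∈ Submodule.span A (s : Set M)
        rw [ha]
        exact Submodule.smul_mem _ a hx }
  have hle : (⊤ : Submodule B M) ≤ N := by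
    rw [← hs]
    exact Submodule.span_le.mpr Submodule.subset_span
  exact eq_top_iff.mpr fun x _ => hle Submodule.mem_top

/-- Noncommutative transitivity of module finiteness along a ring hom. -/
theorem finite_trans {A B M : Type} [Semiring A] [Semiring B] [AddCommMonoid M]
    [Module B M] (g : A →+* B) [Module A B] [Module A M]
    (hB : ∀ (a : A) (b : B), a • b = g a * b)
    (hM : ∀ (a : A) (x : M), a • x = g a • x)
    (hABfin : Module.Finite A B) (hBMfin : Module.Finite B M) :
    Module.Finite A M := by
  classical
  obtain ⟨s, hs⟩ := hABfin.fg_top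
  obtain ⟨t, ht⟩ := hBMfin.fg_top
  refine ⟨⟨Finset.image₂ (fun (b : B) (x : M) => b • x) s t, ?_⟩⟩
  set N := Submodule.span A ((Finset.image₂ (fun (b : B) (x : M) => b • x) s t : Finset M) : Set M)
    with hN
  have key : ∀ y ∈ Submodule.span B ((t : Finset M) : Set M), ∀ b : B, b • y ∈ N := by
    intro y hy
    refine Submodule.span_induction (p := fun y _ => ∀ b : B, b • y ∈ N) ?_ ?_ ?_ ?_ hy
    · intro z hz b
      have hb : b ∈ Submodule.span A ((s : Finset B) : Set B) := hs ▸ Submodule.mem_top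
      refine Submodule.span_induction (p := fun b _ => b • z ∈ N) ?_ ?_ ?_ ?_ hb
      · intro c hc
        refine Submodule.subset_span ?_
        simp only [Finset.coe_image₂, Set.mem_image2]
        exact ⟨c, hc, z, hz, rfl⟩
      · show (0 : B) • z ∈ N
        rw [zero_smul]; exact N.zero_mem
      · intro b1 b2 _ _ h1 h2
        show (b1 + b2) • z ∈ N
        rw [add_smul]; exact N.add_mem h1 h2
      · intro a b' _ hb'
        show (a • b') • z ∈ N
        rw [hB a b', mul_smul, ← hM]
        exact N.smul_mem a hb'
    · intro b
      show b • (0 : M) ∈ N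
      rw [smul_zero]; exact N.zero_mem
    · intro y1 y2 _ _ h1 h2 b
      show b • (y1 + y2) ∈ N
      rw [smul_add]; exact N.add_mem (h1 b) (h2 b)
    · intro b' y _ hy b
      show b • (b' • y) ∈ N
      rw [smul_smul]; exact hy (b * b')
  have hall : ∀ x : M, x ∈ N := by
    intro x
    have hx : x ∈ Submodule.span B ((t : Finset M) : Set M) := ht ▸ Submodule.mem_top
    simpa using key x hx 1
  exact eq_top_iff.mpr fun x _ => hall x

/-! ### Restriction of scalars along a ring hom, at the `ModuleCat` level -/

variable {Λ Θ : Type} [Ring Λ] [Ring Θ] (f : Λ →+* Θ)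

/-- Restriction of scalars of a bundled module. -/
abbrev resM (N : ModuleCat.{0} Θ) : ModuleCat.{0} Λ :=
  letI : Module Λ N := Module.compHom N f
  ModuleCat.of Λ N

/-- Transport a `Θ`-linear map to a `Λ`-linear map along compatible actions. -/
def resMap {A B : Type} [AddCommGroup A] [AddCommGroup B] [Module Θ A] [Module Θ B]
    [Module Λ A] [Module Λ B]
    (hA : ∀ (r : Λ) (x : A), r • x = f r • x)
    (hB : ∀ (r : Λ) (x : B), r • x = f r • x)
    (g : A →ₗ[Θ] B) : A →ₗ[Λ] B where
  toFun := g
  map_add' := g.map_add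
  map_smul' := fun r x => by
    simp only [RingHom.id_apply, hA, hB, map_smul]

/-- Transport a `Θ`-linear equivalence to a `Λ`-linear equivalence. -/
def resEquiv {A B : Type} [AddCommGroup A] [AddCommGroup B] [Module Θ A] [Module Θ B]
    [Module Λ A] [Module Λ B]
    (hA : ∀ (r : Λ) (x : A), r • x = f r • x)
    (hB : ∀ (r : Λ) (x : B), r • x = f r • x)
    (g : A ≃ₗ[Θ] B) : A ≃ₗ[Λ] B :=
  { g.toEquiv with
    map_add' := g.map_add
    map_smul' := fun r x => by
      simp only [RingHom.id_apply, hA, hB]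
      exact g.map_smul (f r) x }

theorem res_ext {C E D : ModuleCat.{0} Θ} (h : IsExtOf Θ C E D) :
    IsExtOf Λ (resM f C) (resM f E) (resM f D) := by
  obtain ⟨g1, g2, h1, h2, h3⟩ := h
  letI : Module Λ C := Module.compHom C f
  letI : Module Λ E := Module.compHom E f
  letI : Module Λ D := Module.compHom D f
  let g1' : ↥C →ₗ[Λ] ↥E := resMap f (fun _ _ => rfl) (fun _ _ => rfl) g1
  let g2' : ↥E →ₗ[Λ] ↥D := resMap f (fun _ _ => rfl) (fun _ _ => rfl) g2
  refine ⟨g1', g2', h1, h2, ?_⟩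
  ext x
  constructor
  · rintro ⟨y, rfl⟩
    have hy : g1 y ∈ LinearMap.range g1 := ⟨y, rfl⟩
    rw [h3] at hy
    exact hy
  · intro hx
    have hx' : x ∈ LinearMap.ker g2 := hx
    rw [← h3] at hx'
    exact hx'

section Transport

variable (hFin : ∀ N : ModuleCat.{0} Θ, Module.Finite Θ N → Module.Finite Λ (resM f N))
variable (hProj : ∀ N : ModuleCat.{0} Θ, Module.Finite Θ N → Module.Projective Θ N →
  Module.Projective Λ (resM f N))

include hFin hProj

theorem res_shifts {G N : ModuleCat.{0} Θ} (h : InShifts Θ G N) :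
    InShifts Λ (resM f G) (resM f N) := by
  induction h with
  | base => exact .base
  | up M N E _ hN hE hPE hext ih =>
      exact .up _ _ _ ih (hFin _ hN) (hFin _ hE) (hProj _ hE hPE) (res_ext f hext)
  | down M N E _ hN hE hPE hext ih =>
      exact .down _ _ _ ih (hFin _ hN) (hFin _ hE) (hProj _ hE hPE) (res_ext f hext)

theorem res_stIso {M N : ModuleCat.{0} Θ} (h : StIso Θ M N) :
    StIso Λ (resM f M) (resM f N) := by
  obtain ⟨P, Q, fP, pP, fQ, pQ, ⟨e⟩⟩ := h
  letI : Module Λ M := Module.compHom M f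
  letI : Module Λ N := Module.compHom N f
  letI : Module Λ P := Module.compHom P f
  letI : Module Λ Q := Module.compHom Q f
  let e' : (↥M × ↥P) ≃ₗ[Λ] (↥N × ↥Q) :=
    resEquiv f (fun _ _ => rfl) (fun _ _ => rfl) e
  exact ⟨resM f P, resM f Q, hFin _ fP, hProj _ fP pP, hFin _ fQ, hProj _ fQ pQ, ⟨e'⟩⟩

theorem res_thick1 {C : ModuleCat.{0} Θ → Prop} {C' : ModuleCat.{0} Λ → Prop}
    (H : ∀ X, C X → C' (resM f X)) {M : ModuleCat.{0} Θ} (h : InThick1 Θ C M) :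
    InThick1 Λ C' (resM f M) := by
  obtain ⟨t, F, hF, P, Q, fP, pP, fQ, pQ, ι, π, hsplit⟩ := h
  letI : Module Λ M := Module.compHom M f
  letI : Module Λ P := Module.compHom P f
  letI : Module Λ Q := Module.compHom Q f
  letI : ∀ j, Module Λ (F j) := fun j => Module.compHom (F j) f
  let ι' : (↥M × ↥P) →ₗ[Λ] ((∀ j, ↥(F j)) × ↥Q) :=
    resMap f (fun _ _ => rfl) (fun _ _ => rfl) ι
  let π' : ((∀ j, ↥(F j)) × ↥Q) →ₗ[Λ] (↥M × ↥P) :=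
    resMap f (fun _ _ => rfl) (fun _ _ => rfl) π
  refine ⟨t, fun j => resM f (F j), ?_, resM f P, resM f Q, hFin _ fP, hProj _ fP pP,
    hFin _ fQ, hProj _ fQ pQ, ι', π', hsplit⟩
  intro j
  refine ⟨hFin _ (hF j).1, ?_⟩
  obtain ⟨G, hG, hsh⟩ := (hF j).2
  exact ⟨resM f G, H G hG, res_shifts f hFin hProj hsh⟩

theorem res_star {Cc Dd : ModuleCat.{0} Θ → Prop} {Cc' Dd' : ModuleCat.{0} Λ → Prop}
    (hC : ∀ X, Cc X → Cc' (resM f X)) (hD : ∀ X, Dd X → Dd' (resM f X))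
    {M : ModuleCat.{0} Θ} (h : InStar Θ Cc Dd M) : InStar Λ Cc' Dd' (resM f M) := by
  obtain ⟨A, E, B, hA, hB, finA, finE, finB, hext, hiso⟩ := h
  exact ⟨resM f A, resM f E, resM f B, hC _ hA, hD _ hB, hFin _ finA, hFin _ finE, hFin _ finB,
    res_ext f hext, res_stIso f hFin hProj hiso⟩

theorem res_thick {C : ModuleCat.{0} Θ → Prop} {C' : ModuleCat.{0} Λ → Prop}
    (H : ∀ X, C X → C' (resM f X)) :
    ∀ (n : ℕ) (M : ModuleCat.{0} Θ), Thick Θ C n M → Thick Λ C' n (resM f M) := by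
  intro n
  induction n with
  | zero => exact fun M h => res_thick1 f hFin hProj H h
  | succ n ih =>
      intro M h
      exact res_thick1 f hFin hProj
        (fun X hX => res_star f hFin hProj ih (fun Y hY => res_thick1 f hFin hProj H hY) hX) h

end Transport

/-! ### Invariance of `Thick` under additive equivalences compatible with the action -/

theorem inthick1_congr {Λ : Type} [Ring Λ] {C : ModuleCat.{0} Λ → Prop}
    {M N : ModuleCat.{0} Λ} (h : InThick1 Λ C M) (e : M ≃+ N)
    (he : ∀ (r : Λ) (x : M), e (r • x) = r • e x) : InThick1 Λ C N := by
  obtain ⟨t, F, hF, P, Q, fP, pP, fQ, pQ, ι, π, hsplit⟩ := h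
  let e' : M ≃ₗ[Λ] N := { e with map_smul' := he }
  refine ⟨t, F, hF, P, Q, fP, pP, fQ, pQ,
    ι ∘ₗ ((e'.symm.prodCongr (LinearEquiv.refl Λ P)).toLinearMap),
    ((e'.prodCongr (LinearEquiv.refl Λ P)).toLinearMap) ∘ₗ π, ?_⟩
  intro z
  simp only [LinearMap.coe_comp, Function.comp_apply, LinearEquiv.coe_coe]
  rw [hsplit]
  obtain ⟨a, b⟩ := z
  exact Prod.ext (e.apply_symm_apply a) rfl

theorem thick_congr {Λ : Type} [Ring Λ] {C : ModuleCat.{0} Λ → Prop} {n : ℕ}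
    {M N : ModuleCat.{0} Λ} (h : Thick Λ C n M) (e : M ≃+ N)
    (he : ∀ (r : Λ) (x : M), e (r • x) = r • e x) : Thick Λ C n N := by
  cases n with
  | zero => exact inthick1_congr h e he
  | succ n => exact inthick1_congr h e he

end BerghOppermann

/-- Lemma (Bergh–Oppermann): if `Λ` and `Π` are finite dimensional selfinjective algebras
with algebra maps `i : Λ → Θ` and `pr : Θ → Λ` satisfying `pr ∘ i = id`, and `Θ` is projective
as a left `Λ`-module via `i`, then `dim (stmod Λ) ≤ dim (stmod Θ)`. -/
theorem stmt_16 (k : Type) [Field k] (Λ : Type) [Ring Λ] [Algebra k Λ]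
    [FiniteDimensional k Λ] (Θ : Type) [Ring Θ] [Algebra k Θ] [FiniteDimensional k Θ]
    (hΛ : IsSelfInjectiveRing Λ) (hTh : IsSelfInjectiveRing Θ)
    (i : Λ →ₐ[k] Θ) (pr : Θ →ₐ[k] Λ) (hpri : pr.comp i = AlgHom.id k Λ) :
    letI : Module Λ Θ := Module.compHom Θ i.toRingHom
    Module.Projective Λ Θ →
      ∀ d : ℕ, StModDimLE Θ d → StModDimLE Λ d := by
  classical
  letI : Module Λ Θ := Module.compHom Θ i.toRingHom
  intro hproj d hd
  obtain ⟨G, hGfin, hall⟩ := hd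
  have hpri' : ∀ x : Λ, pr (i x) = x := fun x => AlgHom.congr_fun hpri x
  have hΛΘfin : Module.Finite Λ Θ := by
    refine BerghOppermann.finite_of_smul_factor (B := k) ?_ inferInstance
    intro c
    refine ⟨algebraMap k Λ c, fun θ => ?_⟩
    show c • θ = i (algebraMap k Λ c) * θ
    rw [Algebra.smul_def, AlgHom.commutes]
  have hFin : ∀ N : ModuleCat.{0} Θ, Module.Finite Θ N →
      Module.Finite Λ (BerghOppermann.resM i.toRingHom N) := by
    intro N hN
    letI : Module Λ N := Module.compHom N i.toRingHom
    have : Module.Finite Λ ↥N :=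
      BerghOppermann.finite_trans i.toRingHom (fun a b => rfl) (fun a x => rfl) hΛΘfin hN
    exact this
  haveI : Module.Projective Λ Θ := hproj
  have hpi : ∀ n : ℕ, Module.Projective Λ (Fin n → Θ) := by
    intro n
    induction n with
    | zero =>
        refine Module.Projective.of_split (M := Θ) 0 0 ?_
        refine LinearMap.ext fun x => funext fun j => j.elim0
    | succ n ih =>
        haveI := ih
        let le : (Fin (n + 1) → Θ) ≃ₗ[Λ] Θ × (Fin n → Θ) :=
          { Fin.consEquiv (fun _ : Fin (n+1) => Θ) |>.symm with
            map_add' := fun x y => rfl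
            map_smul' := fun c x => rfl }
        exact Module.Projective.of_equiv le.symm
  have hProj : ∀ N : ModuleCat.{0} Θ, Module.Finite Θ N → Module.Projective Θ N →
      Module.Projective Λ (BerghOppermann.resM i.toRingHom N) := by
    intro N hN hP
    letI : Module Λ N := Module.compHom N i.toRingHom
    obtain ⟨n, g, hg⟩ := Module.Finite.exists_fin' Θ ↥N
    obtain ⟨h, hh⟩ := Module.projective_lifting_property g LinearMap.id hg
    haveI := hpi n
    let h' : ↥N →ₗ[Λ] (Fin n → Θ) :=
      BerghOppermann.resMap i.toRingHom (fun _ _ => rfl) (fun _ _ => rfl) h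
    let g' : (Fin n → Θ) →ₗ[Λ] ↥N :=
      BerghOppermann.resMap i.toRingHom (fun _ _ => rfl) (fun _ _ => rfl) g
    exact Module.Projective.of_split h' g' (LinearMap.ext fun x => LinearMap.congr_fun hh x)
  refine ⟨BerghOppermann.resM i.toRingHom G, hFin G hGfin, ?_⟩
  intro M hM
  letI : Module Θ ↥M := Module.compHom ↥M pr.toRingHom
  let M' : ModuleCat.{0} Θ := ModuleCat.of Θ ↥M
  have hM' : Module.Finite Θ (↥M) := by
    refine BerghOppermann.finite_of_smul_factor (B := Λ) ?_ hM
    intro b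
    exact ⟨i b, fun x => (congrArg (fun c : Λ => c • x) (hpri' b)).symm⟩
  have h2 := BerghOppermann.res_thick i.toRingHom hFin hProj
    (C := fun X => X = G) (C' := fun X => X = BerghOppermann.resM i.toRingHom G)
    (fun X hX => by rw [hX]) d M' (hall M' hM')
  refine BerghOppermann.thick_congr h2 (AddEquiv.refl (↥M)) ?_
  intro r x
  exact congrArg (fun c : Λ => c • (AddEquiv.refl (↥M) x)) (hpri' r)

end
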